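/- Let X and Y be independent random variables taking values in [1,∞), each with tail P(X > x) = x^{-α}(1+o(1)) as x → ∞ for some α ∈ (1,2). Then P(XY > t) = Θ(t^{−α} log t) as t → ∞; i.e. there exist constants 0 < c ≤ C and t_0 such that c · t^{−α} log t ≤ P(XY > t) ≤ C · t^{−α} log t for all t ≥ t_0. -/

import Mathlib

open MeasureTheory Filter Set

noncomputable section

lemma tail_aux {Ω : Type*} [MeasurableSpace Ω] (P : Measure Ω) [IsProbabilityMeasure P]
    (α : ℝ) (Z : Ω → ℝ) (ε : ℝ) (hε : 0 < ε)
    (htail : Tendsto (fun x : ℝ => x ^ α * (P {ω | x < Z ω}).toReal) atTop (nhds 1)) :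
    ∃ x₀ : ℝ, 2 ≤ x₀ ∧ ∀ x, x₀ ≤ x →
      (1 - ε) * x ^ (-α) ≤ (P {ω | x < Z ω}).toReal ∧
      (P {ω | x < Z ω}).toReal ≤ (1 + ε) * x ^ (-α) := by
  obtain ⟨N, hN⟩ := (Metric.tendsto_atTop.mp htail) ε hε
  refine ⟨max N 2, le_max_right _ _, fun x hx => ?_⟩
  have hx2 : (2:ℝ) ≤ x := le_trans (le_max_right _ _) hx
  have hx0 : (0:ℝ) < x := by linarith
  have hd := hN x (le_trans (le_max_left _ _) hx)
  rw [Real.dist_eq, abs_lt] at hd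
  set p := (P {ω | x < Z ω}).toReal with hp
  have hxα : (0:ℝ) < x ^ α := Real.rpow_pos_of_pos hx0 α
  have hxnα : (0:ℝ) < x ^ (-α) := Real.rpow_pos_of_pos hx0 (-α)
  have hmul : x ^ α * x ^ (-α) = 1 := by
    rw [← Real.rpow_add hx0]; simp
  constructor
  · nlinarith [hd.1, mul_pos hxα hxnα]
  · nlinarith [hd.2, mul_pos hxα hxnα]

set_option maxHeartbeats 16000000 in
/-- if `X, Y` are independent, `[1,∞)`-valued and
`P(X > x) = x^{-α}(1+o(1))`, `P(Y > x) = x^{-α}(1+o(1))` with `α ∈ (1,2)`, then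
`P(XY > t) = Θ(t^{-α} log t)`. -/
theorem stmt14
    (α : ℝ) (hα : α ∈ Set.Ioo (1 : ℝ) 2)
    {Ω : Type*} [MeasurableSpace Ω] (P : Measure Ω) [IsProbabilityMeasure P]
    (X Y : Ω → ℝ) (hXm : Measurable X) (hYm : Measurable Y)
    (hindep : ProbabilityTheory.IndepFun X Y P)
    (hX1 : ∀ ω, 1 ≤ X ω) (hY1 : ∀ ω, 1 ≤ Y ω)
    (htailX : Tendsto (fun x : ℝ => x ^ α * (P {ω | x < X ω}).toReal) atTop (nhds 1))
    (htailY : Tendsto (fun x : ℝ => x ^ α * (P {ω | x < Y ω}).toReal) atTop (nhds 1)) :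
    ∃ c C t₀ : ℝ, 0 < c ∧ c ≤ C ∧ ∀ t : ℝ, t₀ ≤ t →
      c * t ^ (-α) * Real.log t ≤ (P {ω | t < X ω * Y ω}).toReal ∧
      (P {ω | t < X ω * Y ω}).toReal ≤ C * t ^ (-α) * Real.log t := by
  obtain ⟨hα1, hα2⟩ := hα
  have hα0 : (0:ℝ) < α := by linarith
  have hlog2 : (0:ℝ) < Real.log 2 := Real.log_pos one_lt_two
  -- the constant δ and the accuracy ε
  set β := (2:ℝ) ^ (-α) with hβdef
  have hβpos : 0 < β := Real.rpow_pos_of_pos two_pos _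
  have hβhalf : β < 1/2 := by
    have h := Real.rpow_lt_rpow_of_exponent_lt (one_lt_two (α := ℝ))
      (show -α < -1 by linarith)
    rw [Real.rpow_neg_one] at h
    rw [hβdef]; linarith [h]
  set δ := 1 - β with hδdef
  have hδpos : 0 < δ := by simp only [hδdef]; linarith
  have hδ1 : δ ≤ 1 := by simp only [hδdef]; linarith
  set ε := δ/4 with hεdef
  have hεpos : 0 < ε := by positivity
  have hεsmall : ε ≤ 1/4 := by simp only [hεdef]; linarith
  -- tail bounds
  obtain ⟨xX, hxX2, hXb⟩ := tail_aux P α X ε hεpos htailX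
  obtain ⟨xY, hxY2, hYb⟩ := tail_aux P α Y ε hεpos htailY
  set x₀ := max xX xY with hx₀def
  have hx₀2 : (2:ℝ) ≤ x₀ := le_trans hxX2 (le_max_left _ _)
  have hx₀0 : (0:ℝ) < x₀ := by linarith
  have hXlow : ∀ x, x₀ ≤ x → (1 - ε) * x ^ (-α) ≤ (P {ω | x < X ω}).toReal :=
    fun x hx => (hXb x (le_trans (le_max_left _ _) hx)).1
  have hXhigh : ∀ x, x₀ ≤ x → (P {ω | x < X ω}).toReal ≤ (1 + ε) * x ^ (-α) :=
    fun x hx => (hXb x (le_trans (le_max_left _ _) hx)).2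
  have hYlow : ∀ x, x₀ ≤ x → (1 - ε) * x ^ (-α) ≤ (P {ω | x < Y ω}).toReal :=
    fun x hx => (hYb x (le_trans (le_max_right _ _) hx)).1
  have hYhigh : ∀ x, x₀ ≤ x → (P {ω | x < Y ω}).toReal ≤ (1 + ε) * x ^ (-α) :=
    fun x hx => (hYb x (le_trans (le_max_right _ _) hx)).2
  -- global bound
  have hcancel : ∀ x : ℝ, 0 < x → x ^ α * x ^ (-α) = 1 := fun x hx => by
    rw [← Real.rpow_add hx]; simp
  set M := max 2 (x₀ ^ α) with hMdef
  have hM2 : (2:ℝ) ≤ M := le_max_left _ _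
  have hglob : ∀ Z : Ω → ℝ, (∀ x, x₀ ≤ x → (P {ω | x < Z ω}).toReal ≤ (1 + ε) * x ^ (-α)) →
      ∀ x, 0 < x → (P {ω | x < Z ω}).toReal ≤ M * x ^ (-α) := by
    intro Z hZ x hx
    have hxnα : (0:ℝ) < x ^ (-α) := Real.rpow_pos_of_pos hx _
    by_cases hxx : x₀ ≤ x
    · calc (P {ω | x < Z ω}).toReal ≤ (1 + ε) * x ^ (-α) := hZ x hxx
        _ ≤ M * x ^ (-α) :=
          mul_le_mul_of_nonneg_right (by linarith) hxnα.le
    · have h1 : (P {ω | x < Z ω}).toReal ≤ 1 := by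
        have := ENNReal.toReal_mono (by simp) (prob_le_one (μ := P) (s := {ω | x < Z ω}))
        simpa using this
      have hxα : x ^ α ≤ x₀ ^ α := Real.rpow_le_rpow hx.le (le_of_not_ge hxx) hα0.le
      have hc := hcancel x hx
      have hMx : x₀ ^ α ≤ M := le_max_right _ _
      calc (P {ω | x < Z ω}).toReal ≤ 1 := h1
        _ = x ^ α * x ^ (-α) := hc.symm
        _ ≤ M * x ^ (-α) :=
          mul_le_mul_of_nonneg_right (le_trans hxα hMx) hxnα.le
  have hXglob : ∀ x, 0 < x → (P {ω | x < X ω}).toReal ≤ M * x ^ (-α) := hglob X hXhigh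
  have hYglob : ∀ x, 0 < x → (P {ω | x < Y ω}).toReal ≤ M * x ^ (-α) := hglob Y hYhigh
  -- independence in real form
  have hind : ∀ (s u : Set ℝ), MeasurableSet s → MeasurableSet u →
      (P (X ⁻¹' s ∩ Y ⁻¹' u)).toReal = (P (X ⁻¹' s)).toReal * (P (Y ⁻¹' u)).toReal := by
    intro s u hs hu
    rw [hindep.measure_inter_preimage_eq_mul s u hs hu, ENNReal.toReal_mul]
  -- probability of dyadic slice
  have hqX : ∀ a b : ℝ, a ≤ b → (P (X ⁻¹' Ioc a b)).toReal
      = (P {ω | a < X ω}).toReal - (P {ω | b < X ω}).toReal := by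
    intro a b hab
    have h1 : X ⁻¹' Ioc a b = X ⁻¹' Ioi a \ X ⁻¹' Ioi b := by
      rw [← preimage_diff, Set.Ioi_diff_Ioi]
    have hsub : X ⁻¹' Ioi b ⊆ X ⁻¹' Ioi a := preimage_mono (Ioi_subset_Ioi hab)
    rw [h1, measure_diff hsub (hXm measurableSet_Ioi).nullMeasurableSet (measure_ne_top P _),
      ENNReal.toReal_sub_of_le (measure_mono hsub) (measure_ne_top P _)]
    rfl
  -- powers of two as rpow
  have h2nat : ∀ k : ℕ, ((2:ℝ)^k : ℝ) = (2:ℝ) ^ ((k:ℕ):ℝ) := fun k =>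
    (Real.rpow_natCast 2 k).symm
  have h2αle : (2:ℝ) ^ α ≤ 4 := by
    have h1 : (2:ℝ) ^ α ≤ (2:ℝ) ^ (2:ℝ) :=
      Real.rpow_le_rpow_of_exponent_le one_le_two hα2.le
    have h2 : (2:ℝ) ^ (2:ℝ) = (2:ℝ) ^ ((2:ℕ):ℝ) := by norm_num
    rw [Real.rpow_natCast] at h2
    rw [h2] at h1; norm_num at h1; linarith
  -- the constants
  set c := δ / (16 * Real.log 2) with hcdef
  set C := 32 * M^2 / Real.log 2 with hCdef
  have hc0 : 0 < c := by positivity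
  have hcC : c ≤ C := by
    rw [hcdef, hCdef, div_le_div_iff₀ (by positivity) hlog2]
    have hA := mul_le_mul_of_nonneg_right hδ1 hlog2.le
    have hM4 : (4:ℝ) ≤ M*M := by
      have := mul_le_mul hM2 hM2 (by norm_num : (0:ℝ) ≤ 2) (by linarith : (0:ℝ) ≤ M)
      linarith
    have hB := mul_le_mul_of_nonneg_left hM4 hlog2.le
    linarith [hA, hB]
  refine ⟨c, C, (2*x₀)^4, hc0, hcC, fun t ht => ?_⟩
  -- basic facts about t
  have ht₀ : (2*x₀)^4 ≤ t := ht
  have ht256 : (256:ℝ) ≤ t := by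
    have h4 : (4:ℝ) ≤ 2*x₀ := by linarith
    calc (256:ℝ) = 4^4 := by norm_num
      _ ≤ (2*x₀)^4 := by gcongr <;> norm_num
      _ ≤ t := ht₀
  have ht0 : (0:ℝ) < t := by linarith
  have ht1 : (1:ℝ) < t := by linarith
  have hlogt : 0 < Real.log t := Real.log_pos ht1
  have hlogb8 : (8:ℝ) ≤ Real.logb 2 t := by
    rw [Real.le_logb_iff_rpow_le one_lt_two ht0]
    have h2 : (2:ℝ) ^ (8:ℝ) = (2:ℝ) ^ ((8:ℕ):ℝ) := by norm_num
    rw [Real.rpow_natCast] at h2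
    rw [h2]; norm_num; linarith
  have hlogb0 : (0:ℝ) ≤ Real.logb 2 t := by linarith
  have hlogbdef : Real.logb 2 t = Real.log t / Real.log 2 := Real.log_div_log.symm
  have hsqrt : t ^ ((1:ℝ)/2) * t ^ ((1:ℝ)/2) = t := by
    rw [← Real.rpow_add ht0]; norm_num
  have hsqrt_pos : 0 < t ^ ((1:ℝ)/2) := Real.rpow_pos_of_pos ht0 _
  have hsqrt_ge : 2 * x₀^2 ≤ t ^ ((1:ℝ)/2) := by
    by_contra hcon
    push_neg at hcon
    have h1 : t^((1:ℝ)/2) * t^((1:ℝ)/2) < (2*x₀^2) * (2*x₀^2) :=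
      mul_self_lt_mul_self hsqrt_pos.le hcon
    have h2 : (2*x₀)^4 = 16*x₀^4 := by ring
    have h3 : (0:ℝ) ≤ x₀^4 := by positivity
    linarith [hsqrt, ht₀]
  have htnα : (0:ℝ) < t ^ (-α) := Real.rpow_pos_of_pos ht0 _
  constructor
  · -- LOWER BOUND
    set k₀ := ⌈Real.logb 2 x₀⌉₊ with hk₀def
    set n := ⌊Real.logb 2 t / 2⌋₊ with hndef
    have hlogx₀ : 0 ≤ Real.logb 2 x₀ := Real.logb_nonneg one_lt_two (by linarith)
    have h2k₀low : x₀ ≤ (2:ℝ)^k₀ := by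
      rw [h2nat]
      calc x₀ = (2:ℝ) ^ Real.logb 2 x₀ := (Real.rpow_logb two_pos (by norm_num) hx₀0).symm
        _ ≤ (2:ℝ) ^ ((k₀:ℕ):ℝ) := Real.rpow_le_rpow_of_exponent_le one_le_two (Nat.le_ceil _)
    have h2k₀high : (2:ℝ)^k₀ ≤ 2*x₀ := by
      rw [h2nat]
      calc (2:ℝ) ^ ((k₀:ℕ):ℝ) ≤ (2:ℝ) ^ (Real.logb 2 x₀ + 1) :=
          Real.rpow_le_rpow_of_exponent_le one_le_two (Nat.ceil_lt_add_one hlogx₀).le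
        _ = 2*x₀ := by
          rw [Real.rpow_add two_pos, Real.rpow_logb two_pos (by norm_num) hx₀0,
            Real.rpow_one]
          ring
    have h2n : (2:ℝ)^n ≤ t ^ ((1:ℝ)/2) := by
      rw [h2nat]
      calc (2:ℝ) ^ ((n:ℕ):ℝ) ≤ (2:ℝ) ^ (Real.logb 2 t / 2) :=
          Real.rpow_le_rpow_of_exponent_le one_le_two (Nat.floor_le (by positivity))
        _ = t ^ ((1:ℝ)/2) := by
          rw [show Real.logb 2 t / 2 = Real.logb 2 t * (1/2) by ring,
            Real.rpow_mul (by norm_num : (0:ℝ) ≤ 2), Real.rpow_logb two_pos (by norm_num) ht0]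
    have hnlb : Real.logb 2 t / 4 ≤ (n:ℝ) := by
      have h := Nat.sub_one_lt_floor (Real.logb 2 t / 2)
      rw [← hndef] at h
      linarith
    set A : ℕ → Set Ω := fun k => X ⁻¹' Ioc ((2:ℝ)^k) ((2:ℝ)^(k+1)) ∩ Y ⁻¹' Ioi (t/(2:ℝ)^k)
      with hAdef
    have hAmeas : ∀ k, MeasurableSet (A k) :=
      fun k => (hXm measurableSet_Ioc).inter (hYm measurableSet_Ioi)
    have hAdisj : (↑(Finset.Ico k₀ (k₀+n)) : Set ℕ).PairwiseDisjoint A := by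
      intro i _ j _ hij
      apply Set.disjoint_left.mpr
      rintro ω ⟨hXi, -⟩ ⟨hXj, -⟩
      simp only [hAdef, mem_preimage, mem_Ioc] at hXi hXj
      rcases lt_or_gt_of_ne hij with h | h
      · have : (2:ℝ)^(i+1) ≤ 2^j := pow_le_pow_right₀ one_le_two h
        linarith [hXi.2, hXj.1]
      · have : (2:ℝ)^(j+1) ≤ 2^i := pow_le_pow_right₀ one_le_two h
        linarith [hXi.1, hXj.2]
    have hAsub : ∀ k ∈ Finset.Ico k₀ (k₀+n), A k ⊆ {ω | t < X ω * Y ω} := by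
      intro k _ ω hω
      obtain ⟨hx, hy⟩ := hω
      simp only [mem_preimage, mem_Ioc, mem_Ioi] at hx hy
      have h2k : (0:ℝ) < 2^k := by positivity
      have heq : (2:ℝ)^k * (t/2^k) = t := by field_simp
      have hlt : (2:ℝ)^k * (t/2^k) < X ω * Y ω :=
        mul_lt_mul hx.1 hy.le (by positivity) (by linarith [hx.1])
      rw [heq] at hlt
      exact hlt
    have hterm : ∀ k ∈ Finset.Ico k₀ (k₀+n), δ/4 * t^(-α) ≤ (P (A k)).toReal := by
      intro k hk
      rw [Finset.mem_Ico] at hk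
      set a := (2:ℝ)^k with hadef
      have ha0 : (0:ℝ) < a := by positivity
      have hax₀ : x₀ ≤ a := le_trans h2k₀low (pow_le_pow_right₀ one_le_two hk.1)
      have ha2 : (2:ℝ)^(k+1) = 2*a := by rw [hadef, pow_succ]; ring
      have haup : a ≤ x₀ * t ^ ((1:ℝ)/2) := by
        have h1' : a*2 ≤ (2:ℝ)^k₀ * 2^n := by
          rw [hadef, ← pow_succ, ← pow_add]
          exact pow_le_pow_right₀ one_le_two hk.2
        have h3 : (2:ℝ)^k₀ * 2^n ≤ (2*x₀) * t^((1:ℝ)/2) :=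
          mul_le_mul h2k₀high h2n (by positivity) (by linarith)
        linarith
      have htax₀ : x₀ ≤ t / a := by
        rw [le_div_iff₀ ha0]
        have h1 := mul_le_mul_of_nonneg_left haup hx₀0.le
        have h2 := mul_le_mul_of_nonneg_right hsqrt_ge hsqrt_pos.le
        linarith [h1, h2, hsqrt, ht0.le]
      have hanα : (0:ℝ) < a^(-α) := Real.rpow_pos_of_pos ha0 _
      have haα : (0:ℝ) < a^α := Real.rpow_pos_of_pos ha0 _
      have hq : (P (X ⁻¹' Ioc a (2*a))).toReal
          = (P {ω | a < X ω}).toReal - (P {ω | 2*a < X ω}).toReal := hqX a (2*a) (by linarith)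
      have hqlow : δ/2 * a^(-α) ≤ (P (X ⁻¹' Ioc a (2*a))).toReal := by
        rw [hq]
        have h1 := hXlow a hax₀
        have h2 := hXhigh (2*a) (by linarith)
        have h3 : ((2*a:ℝ))^(-α) = β * a^(-α) := by
          rw [Real.mul_rpow (by norm_num) ha0.le, hβdef]
        rw [h3] at h2
        have hcoef : δ/2 ≤ (1-ε) - (1+ε)*β := by
          have hid : (1-ε) - (1+ε)*β - δ/2 = (1-β)^2/4 := by
            rw [hεdef, hδdef]; ring
          linarith [sq_nonneg (1-β), hid]
        linarith [mul_le_mul_of_nonneg_right hcoef hanα.le, h1, h2]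
      have hplow : 1/2 * (a^α * t^(-α)) ≤ (P (Y ⁻¹' Ioi (t/a))).toReal := by
        have h1 := hYlow (t/a) htax₀
        have h2 : (t/a)^(-α) = t^(-α) * a^α := by
          rw [Real.div_rpow ht0.le ha0.le, Real.rpow_neg ha0.le α, div_inv_eq_mul]
        rw [h2] at h1
        have : (P {ω | t/a < Y ω}).toReal = (P (Y ⁻¹' Ioi (t/a))).toReal := rfl
        rw [this] at h1
        have hu : (0:ℝ) < a^α * t^(-α) := mul_pos haα htnα
        have h5 := mul_le_mul_of_nonneg_right hεsmall hu.le
        linarith [h1, h5, hu.le]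
      have hAk : (P (A k)).toReal
          = (P (X ⁻¹' Ioc a (2*a))).toReal * (P (Y ⁻¹' Ioi (t/a))).toReal := by
        have hAeq : A k = X ⁻¹' Ioc a (2*a) ∩ Y ⁻¹' Ioi (t/a) := by
          simp only [hAdef]
          rw [ha2]
        rw [hAeq, hind _ _ measurableSet_Ioc measurableSet_Ioi]
      rw [hAk]
      have hqnn : (0:ℝ) ≤ (P (X ⁻¹' Ioc a (2*a))).toReal := ENNReal.toReal_nonneg
      calc δ/4 * t^(-α) = (δ/2 * a^(-α)) * (1/2 * (a^α * t^(-α))) := by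
            have hc := hcancel a ha0
            linear_combination (-(δ/4) * t^(-α)) * hc
        _ ≤ _ := mul_le_mul hqlow hplow (by positivity) hqnn
    have hcard : (Finset.Ico k₀ (k₀+n)).card = n := by simp
    have hsum_le : (n:ℝ) * (δ/4 * t^(-α)) ≤ ∑ k ∈ Finset.Ico k₀ (k₀+n), (P (A k)).toReal := by
      have h := Finset.card_nsmul_le_sum (Finset.Ico k₀ (k₀+n))
        (fun k => (P (A k)).toReal) _ hterm
      rwa [hcard, nsmul_eq_mul] at h
    have hPsum : ∑ k ∈ Finset.Ico k₀ (k₀+n), (P (A k)).toReal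
        ≤ (P {ω | t < X ω * Y ω}).toReal := by
      rw [← ENNReal.toReal_sum (fun k _ => measure_ne_top P _)]
      apply ENNReal.toReal_mono (measure_ne_top P _)
      rw [← measure_biUnion_finset hAdisj (fun k _ => hAmeas k)]
      exact measure_mono (iUnion₂_subset hAsub)
    have hfin : c * t^(-α) * Real.log t ≤ (n:ℝ) * (δ/4 * t^(-α)) := by
      rw [hlogbdef] at hnlb
      have h := mul_le_mul_of_nonneg_right hnlb
        (mul_nonneg (by positivity : (0:ℝ) ≤ δ/4) htnα.le)
      calc c * t^(-α) * Real.log t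
          = (Real.log t/Real.log 2/4) * (δ/4*t^(-α)) := by
            rw [hcdef]; field_simp; ring
        _ ≤ (n:ℝ) * (δ/4 * t^(-α)) := h
    linarith
  · -- UPPER BOUND
    set K := ⌈Real.logb 2 t⌉₊ with hKdef
    have hK1 : t ≤ (2:ℝ)^K := by
      rw [h2nat]
      calc t = (2:ℝ) ^ Real.logb 2 t := (Real.rpow_logb two_pos (by norm_num) ht0).symm
        _ ≤ (2:ℝ) ^ ((K:ℕ):ℝ) := Real.rpow_le_rpow_of_exponent_le one_le_two (Nat.le_ceil _)
    have hKle : (K:ℝ) ≤ Real.logb 2 t + 1 := (Nat.ceil_lt_add_one hlogb0).le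
    set U : ℕ → Set Ω := fun k => X ⁻¹' Ico ((2:ℝ)^k) ((2:ℝ)^(k+1)) ∩
      Y ⁻¹' Ioi (t/(2:ℝ)^(k+1)) with hUdef
    have hcover : {ω | t < X ω * Y ω} ⊆ (⋃ k ∈ Finset.range K, U k) ∪
        X ⁻¹' Ici ((2:ℝ)^K) := by
      intro ω hω
      simp only [mem_setOf_eq] at hω
      have hXω1 : (1:ℝ) ≤ X ω := hX1 ω
      have hXpos : (0:ℝ) < X ω := by linarith
      by_cases hcase : (2:ℝ)^K ≤ X ω
      · exact Or.inr hcase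
      · push_neg at hcase
        set k := ⌊Real.logb 2 (X ω)⌋₊ with hkdef
        have hlogX : 0 ≤ Real.logb 2 (X ω) := Real.logb_nonneg one_lt_two hXω1
        have h1 : (2:ℝ)^k ≤ X ω := by
          rw [h2nat]
          calc (2:ℝ) ^ ((k:ℕ):ℝ) ≤ (2:ℝ) ^ Real.logb 2 (X ω) :=
              Real.rpow_le_rpow_of_exponent_le one_le_two (Nat.floor_le hlogX)
            _ = X ω := Real.rpow_logb two_pos (by norm_num) hXpos
        have h2 : X ω < (2:ℝ)^(k+1) := by
          rw [h2nat]
          calc X ω = (2:ℝ) ^ Real.logb 2 (X ω) :=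
              (Real.rpow_logb two_pos (by norm_num) hXpos).symm
            _ < (2:ℝ) ^ (((k+1:ℕ)):ℝ) := by
              apply Real.rpow_lt_rpow_of_exponent_lt one_lt_two
              push_cast
              exact Nat.lt_floor_add_one _
        have hkK : k < K := by
          have h3 : (2:ℝ)^k < 2^K := lt_of_le_of_lt h1 hcase
          exact (pow_lt_pow_iff_right₀ one_lt_two).mp h3
        have hYω : t/(2:ℝ)^(k+1) < Y ω := by
          have hp : (0:ℝ) < 2^(k+1) := by positivity
          have hd1 : t / (2:ℝ)^(k+1) ≤ t / X ω := by gcongr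
          have hd2 : t / X ω < Y ω := by rw [div_lt_iff₀ hXpos]; linarith [hω]
          linarith
        left
        simp only [hUdef, mem_iUnion, Finset.mem_range, exists_prop]
        exact ⟨k, hkK, ⟨⟨h1, h2⟩, hYω⟩⟩
    have hmain : (P {ω | t < X ω * Y ω}).toReal
        ≤ ∑ k ∈ Finset.range K, (P (U k)).toReal + (P (X ⁻¹' Ici ((2:ℝ)^K))).toReal := by
      have h1 : P {ω | t < X ω * Y ω}
          ≤ ∑ k ∈ Finset.range K, P (U k) + P (X ⁻¹' Ici ((2:ℝ)^K)) := by
        refine le_trans (measure_mono hcover) (le_trans (measure_union_le _ _) ?_)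
        exact add_le_add (measure_biUnion_finset_le _ _) le_rfl
      have hne : ∑ k ∈ Finset.range K, P (U k) ≠ ⊤ :=
        ENNReal.sum_ne_top.mpr (fun k _ => measure_ne_top P _)
      have h2 := ENNReal.toReal_mono
        (ENNReal.add_ne_top.mpr ⟨hne, measure_ne_top P _⟩) h1
      rwa [ENNReal.toReal_add hne (measure_ne_top P _),
        ENNReal.toReal_sum (fun k _ => measure_ne_top P _)] at h2
    have h2αpos : (0:ℝ) < (2:ℝ)^α := Real.rpow_pos_of_pos two_pos α
    have hUk : ∀ k ∈ Finset.range K, (P (U k)).toReal ≤ 16 * M^2 * t^(-α) := by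
      intro k _
      set a := (2:ℝ)^k with hadef
      have ha0 : (0:ℝ) < a := by positivity
      have ha2 : (2:ℝ)^(k+1) = 2*a := by rw [hadef, pow_succ]; ring
      have hanα : (0:ℝ) < a^(-α) := Real.rpow_pos_of_pos ha0 _
      have haα : (0:ℝ) < a^α := Real.rpow_pos_of_pos ha0 _
      have hU : (P (U k)).toReal = (P (X ⁻¹' Ico a (2*a))).toReal *
          (P (Y ⁻¹' Ioi (t/(2*a)))).toReal := by
        have he : U k = X ⁻¹' Ico a (2*a) ∩ Y ⁻¹' Ioi (t/(2*a)) := by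
          simp only [hUdef]; rw [ha2]
        rw [he, hind _ _ measurableSet_Ico measurableSet_Ioi]
      have hhalf : (a/2)^(-α) = 2^α * a^(-α) := by
        rw [Real.div_rpow ha0.le (by norm_num : (0:ℝ) ≤ 2),
          Real.rpow_neg (by norm_num : (0:ℝ) ≤ 2) α, div_inv_eq_mul]
        ring
      have hf1 : (P (X ⁻¹' Ico a (2*a))).toReal ≤ M * (2^α * a^(-α)) := by
        have hs : (P (X ⁻¹' Ico a (2*a))).toReal ≤ (P {ω | a/2 < X ω}).toReal := by
          apply ENNReal.toReal_mono (measure_ne_top P _)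
          apply measure_mono
          apply preimage_mono
          intro x hx
          simp only [mem_Ico] at hx
          show a/2 < x
          linarith [hx.1]
        have hg := hXglob (a/2) (by positivity)
        rw [hhalf] at hg
        linarith
      have hf2 : (P (Y ⁻¹' Ioi (t/(2*a)))).toReal ≤ M * (t^(-α) * (2^α * a^α)) := by
        have hg := hYglob (t/(2*a)) (by positivity)
        have h3 : (t/(2*a))^(-α) = t^(-α) * (2^α * a^α) := by
          rw [Real.div_rpow ht0.le (by positivity : (0:ℝ) ≤ 2*a),
            Real.rpow_neg (by positivity : (0:ℝ) ≤ 2*a) α, div_inv_eq_mul,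
            Real.mul_rpow (by norm_num : (0:ℝ) ≤ 2) ha0.le]
        rw [h3] at hg
        exact hg
      rw [hU]
      have hmm := mul_le_mul hf1 hf2 ENNReal.toReal_nonneg (by positivity)
      have hca := hcancel a ha0
      have hid : M * (2^α * a^(-α)) * (M * (t^(-α) * (2^α * a^α)))
          = M^2 * ((2:ℝ)^α * 2^α) * t^(-α) * (a^α * a^(-α)) := by ring
      rw [hid, hca, mul_one] at hmm
      have h4 : (2:ℝ)^α * 2^α ≤ 16 := by
        have := mul_le_mul h2αle h2αle h2αpos.le (by norm_num : (0:ℝ) ≤ 4)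
        linarith
      have h5 := mul_le_mul_of_nonneg_right h4 (mul_nonneg (sq_nonneg M) htnα.le)
      linarith [h5, hmm]
    have htail : (P (X ⁻¹' Ici ((2:ℝ)^K))).toReal ≤ 4*M*t^(-α) := by
      set b := (2:ℝ)^K with hbdef
      have hb0 : (0:ℝ) < b := by positivity
      have hs : (P (X ⁻¹' Ici b)).toReal ≤ (P {ω | b/2 < X ω}).toReal := by
        apply ENNReal.toReal_mono (measure_ne_top P _)
        apply measure_mono
        apply preimage_mono
        intro x hx
        show b/2 < x
        have hbx : b ≤ x := hx
        linarith
      have hg := hXglob (b/2) (by positivity)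
      have hhalf : (b/2)^(-α) = 2^α * b^(-α) := by
        rw [Real.div_rpow hb0.le (by norm_num : (0:ℝ) ≤ 2),
          Real.rpow_neg (by norm_num : (0:ℝ) ≤ 2) α, div_inv_eq_mul]
        ring
      rw [hhalf] at hg
      have h3 : b^(-α) ≤ t^(-α) := by
        have h4 : t^α ≤ b^α := Real.rpow_le_rpow ht0.le hK1 hα0.le
        rw [Real.rpow_neg ht0.le, Real.rpow_neg hb0.le]
        exact inv_anti₀ (Real.rpow_pos_of_pos ht0 α) h4
      have hbnα : (0:ℝ) < b^(-α) := Real.rpow_pos_of_pos hb0 _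
      have h5' : (2:ℝ)^α * b^(-α) ≤ 4 * t^(-α) :=
        calc (2:ℝ)^α * b^(-α) ≤ 4 * b^(-α) := mul_le_mul_of_nonneg_right h2αle hbnα.le
          _ ≤ 4 * t^(-α) := by linarith [h3]
      have h5 : M * (2^α * b^(-α)) ≤ M * (4 * t^(-α)) :=
        mul_le_mul_of_nonneg_left h5' (by linarith : (0:ℝ) ≤ M)
      linarith [hs, hg, h5]
    have hsum : ∑ k ∈ Finset.range K, (P (U k)).toReal ≤ (K:ℝ) * (16*M^2*t^(-α)) := by
      have h := Finset.sum_le_card_nsmul (Finset.range K) _ _ hUk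
      rwa [Finset.card_range, nsmul_eq_mul] at h
    have hCid : C * t^(-α) * Real.log t = 32*M^2 * Real.logb 2 t * t^(-α) := by
      rw [hCdef, hlogbdef]; field_simp
    have hM0 : (0:ℝ) ≤ M := by linarith
    have h16M : (0:ℝ) ≤ 16*M^2 := by positivity
    have hcoef : (K:ℝ)*(16*M^2) + 4*M ≤ 32*M^2*Real.logb 2 t := by
      have hA := mul_le_mul_of_nonneg_left hKle h16M
      have hB := mul_le_mul_of_nonneg_left hlogb8 h16M
      have hC := mul_le_mul_of_nonneg_left hM2 hM0
      linarith [hA, hB, hC, hM0]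
    have h6 := mul_le_mul_of_nonneg_right hcoef htnα.le
    rw [hCid]
    linarith [hmain, hsum, htail, h6]
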